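/- In every topological model M, for all formulas φ, ψ and every point s: M, s satisfies [φ]Iψ if and only if M, s satisfies φ → I[φ]ψ. (Soundness of the interior-modality reduction axiom for public announcements in topological models.) -/
import Mathlib


/-- `τ` is a topology on the set `A`: a collection of subsets of `A` containing the
empty set and `A`, closed under arbitrary unions and under (nonempty) finite
intersections. -/
def IsTopologyOn {T : Type} (A : Set T) (τ : Set (Set T)) : Prop :=
  (∀ U ∈ τ, U ⊆ A) ∧ (∅ : Set T) ∈ τ ∧ A ∈ τ ∧
    (∀ C ⊆ τ, ⋃₀ C ∈ τ) ∧
    (∀ C ⊆ τ, C.Finite → C.Nonempty → ⋂₀ C ∈ τ)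

/-- Formulas of topological public announcement logic: propositional letters,
negation, conjunction, the interior modality `I`, and public announcement `[φ]ψ`. -/
inductive TForm where
  | atom : ℕ → TForm
  | neg : TForm → TForm
  | and : TForm → TForm → TForm
  | int : TForm → TForm
  | ann : TForm → TForm → TForm
deriving DecidableEq

/-- Material implication `φ → ψ` as the derived connective `¬(φ ∧ ¬ψ)`. -/
def TForm.imp (φ ψ : TForm) : TForm := .neg (.and φ (.neg ψ))

/-- A topological model: a carrier set, a collection of subsets of it (intended to be
a topology on the carrier), and a valuation. -/
structure TopModel (T : Type) where
  carrier : Set T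
  tau : Set (Set T)
  val : ℕ → Set T

/-- The restriction of a topological model to a subset `A`: carrier `A`, the induced
collection `{O ∩ A : O ∈ τ}`, and valuation `p ↦ v(p) ∩ A`. -/
def TopModel.restrict {T : Type} (M : TopModel T) (A : Set T) : TopModel T where
  carrier := A
  tau := {V | ∃ O ∈ M.tau, V = O ∩ A}
  val := fun p => M.val p ∩ A

/-- Satisfaction `M, t ⊨ φ` in a topological model; announcing `φ` restricts the
model to the extension `(φ)^M = {u ∈ T : M, u ⊨ φ}`. -/
def TSat {T : Type} : TopModel T → TForm → T → Prop
  | M, .atom p, t => t ∈ M.val p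
  | M, .neg φ, t => ¬ TSat M φ t
  | M, .and φ ψ, t => TSat M φ t ∧ TSat M ψ t
  | M, .int φ, t => ∃ U ∈ M.tau, t ∈ U ∧ ∀ u ∈ U, TSat M φ u
  | M, .ann φ ψ, t =>
      TSat M φ t → TSat (M.restrict {u ∈ M.carrier | TSat M φ u}) ψ t
/-- Interior-modality reduction axiom for PAL over topological models: at every point
`s` of the model, `[φ]Iψ ↔ (φ → I[φ]ψ)`. -/
theorem interior_reduction_sound {T : Type} (M : TopModel T)
    (hM : IsTopologyOn M.carrier M.tau) (φ ψ : TForm) (s : T) (hs : s ∈ M.carrier) :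
    TSat M (.ann φ (.int ψ)) s ↔ TSat M (TForm.imp φ (.int (.ann φ ψ))) s := by
  simp only [TForm.imp, TSat, TopModel.restrict, not_and_not_right, Set.mem_setOf_eq]
  constructor
  · intro h hφ
    obtain ⟨U', ⟨O, hO, rfl⟩, hsU, hU⟩ := h hφ
    refine ⟨O, hO, hsU.1, fun u hu hφu => hU u ⟨hu, hM.1 O hO hu, hφu⟩⟩
  · intro h hφ
    obtain ⟨U, hU, hsU, hAll⟩ := h hφ
    exact ⟨U ∩ {u | u ∈ M.carrier ∧ TSat M φ u}, ⟨U, hU, rfl⟩, ⟨hsU, hs, hφ⟩,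
      fun u hu => hAll u hu.1 hu.2.2⟩
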